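/- Every automorphism of a symmetric design fixes an equal number of points and blocks. -/

import Mathlib

open Finset

/-- Every automorphism of a (nontrivial) symmetric design fixes an equal
number of points and blocks. -/
theorem stmt_6 {P : Type*} [Fintype P] [DecidableEq P]
    (v k lam : ℕ) (hv : Fintype.card P = v)
    (𝓑 : Finset (Finset P)) (hcard : 𝓑.card = v)
    (hk : ∀ b ∈ 𝓑, b.card = k)
    (hpair : ∀ p q : P, p ≠ q →
      (𝓑.filter (fun b => p ∈ b ∧ q ∈ b)).card = lam)
    (hlam : 0 < lam) (hlamk : lam < k) (hkv : k < v)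
    (σ : Equiv.Perm P) (hσ : ∀ b ∈ 𝓑, b.image σ ∈ 𝓑) :
    (Finset.univ.filter (fun p => σ p = p)).card =
      (𝓑.filter (fun b => b.image σ = b)).card := by
  classical
  have hk2 : 2 ≤ k := by omega
  have hv3 : 3 ≤ v := by omega
  -- replication number: every point lies in exactly k blocks
  have hcount : ∀ p : P, (𝓑.filter (fun b => p ∈ b)).card * (k-1) = lam * (v-1) := by
    intro p
    calc (𝓑.filter (fun b => p ∈ b)).card * (k-1)
        = ∑ b ∈ 𝓑.filter (fun b => p ∈ b), (b.erase p).card := by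
          rw [Finset.sum_congr rfl (fun b hb => ?_), sum_const, smul_eq_mul]
          simp only [mem_filter] at hb
          rw [card_erase_of_mem hb.2, hk b hb.1]
      _ = ∑ b ∈ 𝓑.filter (fun b => p ∈ b), ∑ q ∈ univ.erase p, (if q ∈ b then 1 else 0) := by
          refine sum_congr rfl (fun b hb => ?_)
          rw [← card_filter]
          congr 1
          ext q
          simp only [mem_filter, mem_erase, mem_univ, and_true, true_and]
      _ = ∑ q ∈ univ.erase p, ∑ b ∈ 𝓑.filter (fun b => p ∈ b), (if q ∈ b then 1 else 0) :=
          Finset.sum_comm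
      _ = ∑ q ∈ univ.erase p, lam := by
          refine sum_congr rfl (fun q hq => ?_)
          rw [← card_filter, filter_filter]
          exact hpair p q (Ne.symm (mem_erase.1 hq).1)
      _ = lam * (v-1) := by
          rw [sum_const, smul_eq_mul, card_erase_of_mem (mem_univ p), card_univ, hv,
            Nat.mul_comm]
  have hsum : ∑ p : P, (𝓑.filter (fun b => p ∈ b)).card = v * k := by
    calc ∑ p : P, (𝓑.filter (fun b => p ∈ b)).card
        = ∑ p : P, ∑ b ∈ 𝓑, (if p ∈ b then 1 else 0) :=
          Finset.sum_congr rfl (fun p _ => card_filter _ _)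
      _ = ∑ b ∈ 𝓑, ∑ p : P, (if p ∈ b then 1 else 0) := Finset.sum_comm
      _ = ∑ b ∈ 𝓑, b.card := by
          refine sum_congr rfl (fun b hb => ?_)
          rw [← card_filter]
          congr 1
          simp
      _ = v * k := by
          rw [Finset.sum_congr rfl hk, sum_const, smul_eq_mul, hcard]
  have hr : ∀ p : P, (𝓑.filter (fun b => p ∈ b)).card = k := by
    intro p
    have hne : Nonempty P := by
      rw [← Fintype.card_pos_iff, hv]; omega
    have hall : ∀ q : P, (𝓑.filter (fun b => q ∈ b)).card
        = (𝓑.filter (fun b => p ∈ b)).card := by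
      intro q
      have := (hcount q).trans (hcount p).symm
      exact Nat.eq_of_mul_eq_mul_right (by omega) this
    have : v * (𝓑.filter (fun b => p ∈ b)).card = v * k := by
      rw [← hsum, Finset.sum_congr rfl (fun q _ => hall q), sum_const, smul_eq_mul,
        card_univ, hv]
    exact Nat.eq_of_mul_eq_mul_left (by omega) this
  -- index blocks by points
  have hcardB : Fintype.card {b // b ∈ 𝓑} = Fintype.card P := by
    rw [Fintype.card_coe, hcard, hv]
  let e : {b // b ∈ 𝓑} ≃ P := Fintype.equivOfCardEq hcardB
  let blk : P → Finset P := fun i => (e.symm i : Finset P)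
  have blk_mem : ∀ i, blk i ∈ 𝓑 := fun i => (e.symm i).2
  have blk_inj : Function.Injective blk := fun i j h =>
    e.symm.injective (Subtype.coe_injective h)
  have sum_blk : ∀ (f : Finset P → ℚ), ∑ i : P, f (blk i) = ∑ b ∈ 𝓑, f b := by
    intro f
    rw [Equiv.sum_comp e.symm (fun x : {b // b ∈ 𝓑} => f x)]
    exact Finset.sum_coe_sort 𝓑 f
  -- the induced permutation on block indices
  let τ : P → P := fun i => e ⟨(blk i).image σ, hσ _ (blk_mem i)⟩
  have blk_τ : ∀ i, blk (τ i) = (blk i).image σ := fun i => by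
    simp only [blk, τ, Equiv.symm_apply_apply]
  have τ_inj : Function.Injective τ := by
    intro i j h
    apply blk_inj
    have h2 : blk (τ i) = blk (τ j) ↔ True := by rw [h]; simp
    rw [blk_τ, blk_τ, iff_true] at h2
    exact Finset.image_injective σ.injective h2
  -- fixed blocks correspond to fixed points of τ
  have hfixb : (𝓑.filter (fun b => b.image σ = b)).card
      = (univ.filter (fun i => τ i = i)).card := by
    symm
    refine Finset.card_bij (fun i _ => blk i) ?_ ?_ ?_
    · intro i hi
      simp only [mem_filter, mem_univ, true_and] at hi ⊢
      exact ⟨blk_mem i, by rw [← blk_τ, hi]⟩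
    · intro i hi j hj h
      exact blk_inj h
    · intro b hb
      simp only [mem_filter, mem_univ, true_and] at hb
      refine ⟨e ⟨b, hb.1⟩, ?_, ?_⟩
      · simp only [mem_filter, mem_univ, true_and]
        apply blk_inj
        rw [blk_τ]
        have : blk (e ⟨b, hb.1⟩) = b := by
          simp only [blk, Equiv.symm_apply_apply]
        rw [this, hb.2]
      · simp only [blk, Equiv.symm_apply_apply]
  -- matrices over ℚ
  let N : Matrix P P ℚ := Matrix.of fun p i => if p ∈ blk i then 1 else 0
  let Pm : Matrix P P ℚ := Matrix.of fun p q => if σ q = p then 1 else 0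
  let Q : Matrix P P ℚ := Matrix.of fun i j => if τ j = i then 1 else 0
  -- intertwining relation
  have hPN : Pm * N = N * Q := by
    ext p i
    rw [Matrix.mul_apply, Matrix.mul_apply]
    have h1 : ∀ q : P, Pm p q * N q i = if q = σ.symm p then N q i else 0 := by
      intro q
      simp only [Pm, Matrix.of_apply]
      rcases eq_or_ne (σ q) p with h | h
      · rw [if_pos h, if_pos (by rw [← h]; exact (σ.symm_apply_apply q).symm), one_mul]
      · rw [if_neg h, if_neg (fun hc => h (by rw [hc]; exact σ.apply_symm_apply p)), zero_mul]
    have h2 : ∀ j : P, N p j * Q j i = if j = τ i then N p j else 0 := by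
      intro j
      simp only [Q, Matrix.of_apply]
      rcases eq_or_ne (τ i) j with h | h
      · rw [if_pos h, if_pos h.symm, mul_one]
      · rw [if_neg h, if_neg (Ne.symm h), mul_zero]
    rw [Finset.sum_congr rfl (fun q _ => h1 q), Finset.sum_congr rfl (fun j _ => h2 j),
      Finset.sum_ite_eq' univ (σ.symm p) (fun q => N q i),
      Finset.sum_ite_eq' univ (τ i) (fun j => N p j),
      if_pos (mem_univ _), if_pos (mem_univ _)]
    simp only [N, Matrix.of_apply, blk_τ]
    congr 1
    rw [eq_iff_iff]
    constructor
    · intro h; exact Finset.mem_image.2 ⟨σ.symm p, h, σ.apply_symm_apply p⟩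
    · intro h
      rcases Finset.mem_image.1 h with ⟨q, hq, hq2⟩
      rwa [← hq2, σ.symm_apply_apply]
  -- N * Nᵀ
  let M : Matrix P P ℚ := Matrix.of fun p q => if p = q then (k : ℚ) else (lam : ℚ)
  have hNNt : N * N.transpose = M := by
    ext p q
    rw [Matrix.mul_apply]
    have h1 : ∀ i : P, N p i * N.transpose i q
        = (fun b : Finset P => if p ∈ b ∧ q ∈ b then (1:ℚ) else 0) (blk i) := by
      intro i
      simp only [N, Matrix.transpose_apply, Matrix.of_apply]
      rcases em (p ∈ blk i) with h | h <;> rcases em (q ∈ blk i) with h' | h' <;>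
        simp [h, h']
    rw [Finset.sum_congr rfl (fun i _ => h1 i),
      sum_blk (fun b : Finset P => if p ∈ b ∧ q ∈ b then (1:ℚ) else 0), Finset.sum_boole]
    simp only [M, Matrix.of_apply]
    rcases eq_or_ne p q with h | h
    · subst h
      rw [if_pos rfl]
      have : (𝓑.filter (fun b => p ∈ b ∧ p ∈ b)) = 𝓑.filter (fun b => p ∈ b) := by
        apply filter_congr; intro b _; simp
      rw [this, hr p]
    · rw [if_neg h, hpair p q h]
  -- explicit inverse of M
  have hkQ : (lam : ℚ) < (k : ℚ) := by exact_mod_cast hlamk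
  have hlamQ : (0 : ℚ) < (lam : ℚ) := by exact_mod_cast hlam
  have hvQ : (3 : ℚ) ≤ (v : ℚ) := by exact_mod_cast hv3
  have hD1 : ((k : ℚ) - lam) ≠ 0 := by linarith
  have hD2 : ((k : ℚ) + ((v : ℚ) - 1) * lam) ≠ 0 := by nlinarith
  set D : ℚ := ((k : ℚ) - lam) * ((k : ℚ) + ((v : ℚ) - 1) * lam) with hDdef
  have hD : D ≠ 0 := mul_ne_zero hD1 hD2
  let Mi : Matrix P P ℚ := Matrix.of fun p q =>
    if p = q then ((k : ℚ) + ((v : ℚ) - 2) * lam) / D else -(lam : ℚ) / D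
  have hMMi : M * Mi = 1 := by
    ext p q
    rw [Matrix.mul_apply, Matrix.one_apply]
    rcases eq_or_ne p q with h | h
    · subst h
      rw [if_pos rfl, ← Finset.sum_erase_add univ _ (mem_univ p)]
      have hconst : ∀ r ∈ univ.erase p, M p r * Mi r p = (lam : ℚ) * (-(lam : ℚ) / D) := by
        intro r hr2
        have hrp : r ≠ p := (mem_erase.1 hr2).1
        simp only [M, Mi, Matrix.of_apply, if_neg (Ne.symm hrp), if_neg hrp]
      rw [Finset.sum_congr rfl hconst, sum_const, card_erase_of_mem (mem_univ p),
        card_univ, hv]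
      simp only [M, Mi, Matrix.of_apply, if_pos rfl, nsmul_eq_mul]
      have hcast : ((v - 1 : ℕ) : ℚ) = (v : ℚ) - 1 := by
        rw [Nat.cast_sub (by omega)]; push_cast; ring
      rw [hcast]
      simp only [eq_self_iff_true, if_true]
      field_simp
      ring
    · rw [if_neg h, ← Finset.sum_erase_add univ _ (mem_univ p)]
      have hq : q ∈ univ.erase p := mem_erase.2 ⟨Ne.symm h, mem_univ q⟩
      rw [← Finset.sum_erase_add (univ.erase p) _ hq]
      have hconst : ∀ r ∈ (univ.erase p).erase q,
          M p r * Mi r q = (lam : ℚ) * (-(lam : ℚ) / D) := by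
        intro r hr2
        have hrq : r ≠ q := (mem_erase.1 hr2).1
        have hrp : r ≠ p := (mem_erase.1 (mem_erase.1 hr2).2).1
        simp only [M, Mi, Matrix.of_apply, if_neg (Ne.symm hrp), if_neg hrq]
      rw [Finset.sum_congr rfl hconst, sum_const, card_erase_of_mem hq,
        card_erase_of_mem (mem_univ p), card_univ, hv]
      simp only [M, Mi, Matrix.of_apply, if_pos rfl, if_neg h, if_neg (Ne.symm h),
        nsmul_eq_mul]
      have hcast : ((v - 1 - 1 : ℕ) : ℚ) = (v : ℚ) - 2 := by
        rw [Nat.cast_sub (by omega), Nat.cast_sub (by omega)]; push_cast; ring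
      rw [hcast]
      simp only [eq_self_iff_true, if_true]
      field_simp
      ring
  -- N is invertible
  have hNright : N * (N.transpose * Mi) = 1 := by
    rw [← Matrix.mul_assoc, hNNt, hMMi]
  have hNleft : (N.transpose * Mi) * N = 1 := mul_eq_one_comm.mp hNright
  -- conjugation and trace
  have hQeq : (N.transpose * Mi) * Pm * N = Q := by
    rw [Matrix.mul_assoc (N.transpose * Mi) Pm N, hPN, ← Matrix.mul_assoc, hNleft, one_mul]
  have htrace : Q.trace = Pm.trace := by
    rw [← hQeq, Matrix.trace_mul_cycle, hNright, one_mul]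
  have hPmtr : Pm.trace = ((univ.filter (fun p => σ p = p)).card : ℚ) := by
    rw [Matrix.trace, ← Finset.sum_boole]
    refine Finset.sum_congr rfl (fun p _ => ?_)
    simp only [Matrix.diag, Pm, Matrix.of_apply]
  have hQtr : Q.trace = ((univ.filter (fun i => τ i = i)).card : ℚ) := by
    rw [Matrix.trace, ← Finset.sum_boole]
    refine Finset.sum_congr rfl (fun i _ => ?_)
    simp only [Matrix.diag, Q, Matrix.of_apply]
  have : ((univ.filter (fun p => σ p = p)).card : ℚ)
      = ((univ.filter (fun i => τ i = i)).card : ℚ) := by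
    rw [← hPmtr, ← hQtr, htrace]
  rw [hfixb]
  exact_mod_cast this
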